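/- arXiv:2412.15688 — 3 statements merged into one kernel-verified Lean document; each statement's English description precedes it below -/
import Mathlib

section
/- For all natural numbers n ≥ 1 and m ≥ 3 and every integer i with 0 ≤ i ≤ n, the number of connected edge cover sets of the generalized friendship graph F_{n,m} of cardinality mn − i equals binomial(n, i) · m^i; moreover F_{n,m} has no connected edge cover sets of cardinality outside the range [mn − n, mn]. -/
/-- `S` is a connected edge cover set of `G`: every edge of `S` is an edge of `G`,
every vertex of `G` is incident with at least one edge of `S`, and the subgraph
induced by the edges of `S` is connected. -/
def IsConnectedEdgeCover {V : Type*} (G : SimpleGraph V) (S : Finset (Sym2 V)) : Prop :=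
  (∀ e ∈ S, e ∈ G.edgeSet) ∧ (∀ v : V, ∃ e ∈ S, v ∈ e) ∧
    (SimpleGraph.fromEdgeSet (↑S : Set (Sym2 V))).Connected

/-- `eC G i` is the number of connected edge cover sets of `G` of cardinality `i`. -/
noncomputable def eC {V : Type*} [Fintype V] (G : SimpleGraph V) (i : ℕ) : ℕ :=
  Nat.card {S : Finset (Sym2 V) // S.card = i ∧ IsConnectedEdgeCover G S}

/-- `rhoC G` is the connected edge cover number of `G`: the minimum cardinality of a
connected edge cover set of `G`. -/
noncomputable def rhoC {V : Type*} [Fintype V] (G : SimpleGraph V) : ℕ :=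
  sInf {k | ∃ S : Finset (Sym2 V), IsConnectedEdgeCover G S ∧ S.card = k}

/-- The generalized friendship graph `F_{n,m}`: `n` cycles of length `m` meeting at a
common vertex (the vertex `none`); the vertex `some (j, k)` is the `(k+1)`-st vertex
(after the centre) of the `j`-th cycle. -/
def friendshipGraph (n m : ℕ) : SimpleGraph (Option (Fin n × Fin (m - 1))) :=
  SimpleGraph.fromRel (fun a b =>
    match a, b with
    | none, some (_, k) => (k : ℕ) = 0 ∨ (k : ℕ) = m - 2
    | some (j, k), some (j', k') => j = j' ∧ (k' : ℕ) = (k : ℕ) + 1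
    | _, _ => False)

namespace FGAux

open SimpleGraph Finset

variable {n m : ℕ}

abbrev Vtx (n m : ℕ) := Option (Fin n × Fin (m - 1))

def ed (hm : 3 ≤ m) (j : Fin n) (t : Fin m) : Sym2 (Vtx n m) :=
  if h0 : (t : ℕ) = 0 then s(none, some (j, ⟨0, by omega⟩))
  else if h1 : (t : ℕ) = m - 1 then s(none, some (j, ⟨m - 2, by omega⟩))
  else s(some (j, ⟨(t : ℕ) - 1, by omega⟩), some (j, ⟨(t : ℕ), by have := t.isLt; omega⟩))

lemma ed_zero (hm : 3 ≤ m) (j : Fin n) (h0 : 0 < m) :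
    ed hm j ⟨0, h0⟩ = s(none, some (j, ⟨0, by omega⟩)) := by
  simp [ed]

lemma ed_last (hm : 3 ≤ m) (j : Fin n) (h0 : m - 1 < m) :
    ed hm j ⟨m - 1, h0⟩ = s(none, some (j, ⟨m - 2, by omega⟩)) := by
  rw [ed, dif_neg (by simp; omega), dif_pos rfl]

lemma ed_succ (hm : 3 ≤ m) (j : Fin n) (k : ℕ) (hk : k < m - 2) (h1 : k + 1 < m) :
    ed hm j ⟨k + 1, h1⟩ = s(some (j, ⟨k, by omega⟩), some (j, ⟨k + 1, by omega⟩)) := by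
  rw [ed, dif_neg (by simp), dif_neg (by simp; omega)]
  simp [Sym2.eq_iff, Prod.ext_iff, Fin.ext_iff]

lemma none_mem_ed (hm : 3 ≤ m) (j : Fin n) (t : Fin m) :
    none ∈ ed hm j t ↔ (t : ℕ) = 0 ∨ (t : ℕ) = m - 1 := by
  rw [ed]; split_ifs with h0 h1 <;> simp_all

lemma some_mem_ed (hm : 3 ≤ m) (j : Fin n) (k : Fin (m - 1)) (j' : Fin n) (t : Fin m) :
    some (j, k) ∈ ed hm j' t ↔ j = j' ∧ ((t : ℕ) = (k : ℕ) ∨ (t : ℕ) = (k : ℕ) + 1) := by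
  rw [ed]; split_ifs with h0 h1 <;>
    simp [Prod.ext_iff, Fin.ext_iff] <;> omega

lemma ed_inj (hm : 3 ≤ m) {j j' : Fin n} {t t' : Fin m}
    (h : ed hm j t = ed hm j' t') : j = j' ∧ t = t' := by
  have h1 := (none_mem_ed hm j t)
  have hmem : ∀ v, v ∈ ed hm j t ↔ v ∈ ed hm j' t' := by rw [h]; simp
  rw [ed, ed] at h
  split_ifs at h with a0 a1 b0 b1 b2 c0 c1 c2 <;>
    simp_all [Sym2.eq_iff, Prod.ext_iff, Fin.ext_iff] <;> omega

end FGAux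

namespace FGAux
open SimpleGraph Finset
variable {n m : ℕ}

lemma ed_mid (hm : 3 ≤ m) (j : Fin n) (t : Fin m) (h1 : (t : ℕ) ≠ 0) (h2 : (t : ℕ) ≠ m - 1) :
    ed hm j t = s(some (j, ⟨(t : ℕ) - 1, by have := t.isLt; omega⟩),
      some (j, ⟨(t : ℕ), by have := t.isLt; omega⟩)) := by
  rw [ed, dif_neg h1, dif_neg h2]

lemma mem_edgeSet_iff (hm : 3 ≤ m) (e : Sym2 (Vtx n m)) :
    e ∈ (friendshipGraph n m).edgeSet ↔ ∃ j t, e = ed hm j t := by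
  induction e using Sym2.ind with
  | _ x y =>
  rw [SimpleGraph.mem_edgeSet]
  constructor
  · intro h
    rw [friendshipGraph, SimpleGraph.fromRel_adj] at h
    obtain ⟨hne, h | h⟩ := h
    · match x, y with
      | none, none => exact absurd rfl hne
      | none, some (j, k) =>
        rcases h with h | h
        · exact ⟨j, ⟨0, by omega⟩, by rw [ed_zero]; simp [Fin.ext_iff, h.symm]⟩
        · exact ⟨j, ⟨m - 1, by omega⟩, by rw [ed_last]; simp [Fin.ext_iff, h.symm]⟩
      | some (j, k), none => exact absurd h (by simp)
      | some (j, k), some (j', k') =>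
        obtain ⟨rfl, hk⟩ := h
        refine ⟨j, ⟨(k' : ℕ), by have := k'.isLt; omega⟩, ?_⟩
        rw [ed_mid hm j _ (by simp; omega) (by have := k'.isLt; simp; omega)]
        simp [Sym2.eq_iff, Prod.ext_iff, Fin.ext_iff]
        omega
    · match x, y with
      | none, none => exact absurd rfl hne
      | some (j, k), none =>
        rcases h with h | h
        · exact ⟨j, ⟨0, by omega⟩, by rw [ed_zero]; simp [Sym2.eq_iff, Fin.ext_iff, h.symm]⟩
        · exact ⟨j, ⟨m - 1, by omega⟩, by rw [ed_last]; simp [Sym2.eq_iff, Fin.ext_iff, h.symm]⟩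
      | none, some (j, k) => exact absurd h (by simp)
      | some (j, k), some (j', k') =>
        obtain ⟨rfl, hk⟩ := h
        refine ⟨j', ⟨(k : ℕ), by have := k.isLt; omega⟩, ?_⟩
        rw [ed_mid hm j' _ (by simp; omega) (by have := k.isLt; simp; omega)]
        simp [Sym2.eq_iff, Prod.ext_iff, Fin.ext_iff]
        omega
  · rintro ⟨j, t, h⟩
    rw [friendshipGraph, SimpleGraph.fromRel_adj]
    rw [ed] at h
    split_ifs at h with h0 h1
    · rcases (Sym2.eq_iff).mp h with ⟨rfl, rfl⟩ | ⟨rfl, rfl⟩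
      · exact ⟨by simp, Or.inl (Or.inl rfl)⟩
      · exact ⟨by simp, Or.inr (Or.inl rfl)⟩
    · rcases (Sym2.eq_iff).mp h with ⟨rfl, rfl⟩ | ⟨rfl, rfl⟩
      · exact ⟨by simp, Or.inl (Or.inr rfl)⟩
      · exact ⟨by simp, Or.inr (Or.inr rfl)⟩
    · rcases (Sym2.eq_iff).mp h with ⟨rfl, rfl⟩ | ⟨rfl, rfl⟩
      · exact ⟨by simp [Prod.ext_iff, Fin.ext_iff]; omega, Or.inl ⟨rfl, by simp; omega⟩⟩
      · exact ⟨by simp [Prod.ext_iff, Fin.ext_iff]; omega, Or.inr ⟨rfl, by simp; omega⟩⟩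

end FGAux

namespace FGAux
open SimpleGraph Finset
variable {n m : ℕ}

lemma reach_down (hm : 3 ≤ m) {S : Finset (Sym2 (Vtx n m))} (j : Fin n) :
    ∀ k (hk : k < m - 1), (∀ t : Fin m, (t : ℕ) ≤ k → ed hm j t ∈ S) →
      (SimpleGraph.fromEdgeSet (↑S : Set (Sym2 (Vtx n m)))).Reachable (some (j, ⟨k, hk⟩)) none := by
  intro k
  induction k with
  | zero =>
    intro hk h
    have h0 := h ⟨0, by omega⟩ (by simp)
    rw [ed_zero] at h0
    refine SimpleGraph.Adj.reachable ?_
    rw [SimpleGraph.fromEdgeSet_adj]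
    exact ⟨by rw [Sym2.eq_swap]; exact_mod_cast h0, by simp⟩
  | succ k ih =>
    intro hk h
    have hadj : (SimpleGraph.fromEdgeSet (↑S : Set (Sym2 (Vtx n m)))).Adj
        (some (j, ⟨k + 1, hk⟩)) (some (j, ⟨k, by omega⟩)) := by
      have h1 := h ⟨k + 1, by omega⟩ (by simp)
      rw [ed_succ hm j k (by omega)] at h1
      rw [SimpleGraph.fromEdgeSet_adj]
      refine ⟨by rw [Sym2.eq_swap]; exact_mod_cast h1, by simp [Prod.ext_iff, Fin.ext_iff]⟩
    exact hadj.reachable.trans (ih (by omega) (fun t ht => h t (by omega)))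

lemma reach_last (hm : 3 ≤ m) {S : Finset (Sym2 (Vtx n m))} (j : Fin n)
    (h : ed hm j ⟨m - 1, by omega⟩ ∈ S) (hk : m - 2 < m - 1) :
    (SimpleGraph.fromEdgeSet (↑S : Set (Sym2 (Vtx n m)))).Reachable (some (j, ⟨m - 2, hk⟩)) none := by
  rw [ed_last] at h
  refine SimpleGraph.Adj.reachable ?_
  rw [SimpleGraph.fromEdgeSet_adj]
  exact ⟨by rw [Sym2.eq_swap]; exact_mod_cast h, by simp⟩

lemma reach_up (hm : 3 ≤ m) {S : Finset (Sym2 (Vtx n m))} (j : Fin n) :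
    ∀ d k (hk : k < m - 1), m - 2 - k ≤ d →
      (∀ t : Fin m, k + 1 ≤ (t : ℕ) → ed hm j t ∈ S) →
      (SimpleGraph.fromEdgeSet (↑S : Set (Sym2 (Vtx n m)))).Reachable (some (j, ⟨k, hk⟩)) none := by
  intro d
  induction d with
  | zero =>
    intro k hk hd h
    have hk2 : k = m - 2 := by omega
    subst hk2
    exact reach_last hm j (h _ (by simp; omega)) hk
  | succ d ih =>
    intro k hk hd h
    by_cases hk2 : k = m - 2
    · subst hk2
      exact reach_last hm j (h _ (by simp; omega)) hk
    · have hklt : k < m - 2 := by omega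
      have hadj : (SimpleGraph.fromEdgeSet (↑S : Set (Sym2 (Vtx n m)))).Adj
          (some (j, ⟨k, hk⟩)) (some (j, ⟨k + 1, by omega⟩)) := by
        have h1 := h ⟨k + 1, by omega⟩ (by simp)
        rw [ed_succ hm j k hklt] at h1
        rw [SimpleGraph.fromEdgeSet_adj]
        exact ⟨by exact_mod_cast h1, by simp [Prod.ext_iff, Fin.ext_iff]⟩
      exact hadj.reachable.trans (ih (k + 1) (by omega) (by omega) (fun t ht => h t (by omega)))

lemma icec_of (hm : 3 ≤ m) (hn : 1 ≤ n) {S : Finset (Sym2 (Vtx n m))}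
    (hsub : ∀ e ∈ S, ∃ j t, e = ed hm j t)
    (hmiss : ∀ j : Fin n, ∀ t t' : Fin m, ed hm j t ∉ S → ed hm j t' ∉ S → t = t') :
    IsConnectedEdgeCover (friendshipGraph n m) S := by
  refine ⟨fun e he => (mem_edgeSet_iff hm e).mpr (hsub e he), ?_, ?_⟩
  · intro v
    match v with
    | none =>
      by_cases h : ed hm (⟨0, hn⟩ : Fin n) ⟨0, by omega⟩ ∈ S
      · exact ⟨_, h, (none_mem_ed hm _ _).mpr (Or.inl rfl)⟩
      · have h2 : ed hm (⟨0, hn⟩ : Fin n) ⟨m - 1, by omega⟩ ∈ S := by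
          by_contra h2
          have := hmiss _ _ _ h h2
          simp [Fin.ext_iff] at this
          omega
        exact ⟨_, h2, (none_mem_ed hm _ _).mpr (Or.inr (by simp))⟩
    | some (j, k) =>
      have hk := k.isLt
      by_cases h : ed hm j ⟨(k : ℕ), by omega⟩ ∈ S
      · exact ⟨_, h, (some_mem_ed hm j k j _).mpr ⟨rfl, Or.inl rfl⟩⟩
      · have h2 : ed hm j ⟨(k : ℕ) + 1, by omega⟩ ∈ S := by
          by_contra h2
          have := hmiss _ _ _ h h2
          simp [Fin.ext_iff] at this
        exact ⟨_, h2, (some_mem_ed hm j k j _).mpr ⟨rfl, Or.inr rfl⟩⟩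
  · rw [SimpleGraph.connected_iff]
    refine ⟨?_, ⟨none⟩⟩
    have key : ∀ v, (SimpleGraph.fromEdgeSet (↑S : Set (Sym2 (Vtx n m)))).Reachable v none := by
      intro v
      match v with
      | none => exact SimpleGraph.Reachable.refl none
      | some (j, k) =>
        obtain ⟨kv, hkv⟩ := k
        by_cases hall : ∀ t : Fin m, (t : ℕ) ≤ kv → ed hm j t ∈ S
        · exact reach_down hm j kv hkv hall
        · push_neg at hall
          obtain ⟨t0, ht0, ht0S⟩ := hall
          refine reach_up hm j (m - 2 - kv) kv hkv le_rfl (fun t ht => ?_)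
          by_contra hts
          have := hmiss j t t0 hts ht0S
          subst this
          omega
    exact fun u v => (key u).trans (key v).symm

end FGAux

namespace FGAux
open SimpleGraph Finset
variable {n m : ℕ}

lemma missing_aux (hm : 3 ≤ m) {S : Finset (Sym2 (Vtx n m))}
    (hS : IsConnectedEdgeCover (friendshipGraph n m) S) (j : Fin n) {t t' : Fin m}
    (h1 : ed hm j t ∉ S) (h2 : ed hm j t' ∉ S) (hlt : (t : ℕ) < (t' : ℕ)) : False := by
  set G' := SimpleGraph.fromEdgeSet (↑S : Set (Sym2 (Vtx n m))) with hG'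
  set a := (t : ℕ)
  set b := (t' : ℕ)
  have hb : b ≤ m - 1 := by have := t'.isLt; omega
  -- the trapped set
  set U : Vtx n m → Prop := fun v => ∃ k : Fin (m - 1), v = some (j, k) ∧ a ≤ (k : ℕ) ∧ (k : ℕ) < b
    with hU
  have hclosed : ∀ x y, U x → G'.Adj x y → U y := by
    rintro x y ⟨k, rfl, hak, hkb⟩ hadj
    rw [hG', SimpleGraph.fromEdgeSet_adj] at hadj
    obtain ⟨hmem, hne⟩ := hadj
    obtain ⟨j', t'', hedef⟩ := (mem_edgeSet_iff hm _).mp (hS.1 _ hmem)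
    have hxmem : some (j, k) ∈ ed hm j' t'' := hedef ▸ Sym2.mem_mk_left _ _
    obtain ⟨rfl, hval⟩ := (some_mem_ed hm j k j' t'').mp hxmem
    have htne : t'' ≠ t := fun h => h1 (h ▸ hedef ▸ hmem)
    have htne' : t'' ≠ t' := fun h => h2 (h ▸ hedef ▸ hmem)
    have htlo : a < (t'' : ℕ) := by
      rcases hval with h | h <;>
        [skip; skip] <;>
      · rcases Nat.lt_or_ge a (t'' : ℕ) with hh | hh
        · exact hh
        · exfalso
          have : (t'' : ℕ) = a := by omega
          exact htne (Fin.ext this)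
    have hthi : (t'' : ℕ) < b := by
      rcases Nat.lt_or_ge (t'' : ℕ) b with hh | hh
      · exact hh
      · exfalso
        have : (t'' : ℕ) = b := by omega
        exact htne' (Fin.ext this)
    have hymem : y ∈ ed hm j t'' := hedef ▸ Sym2.mem_mk_right _ _
    match y with
    | none =>
      rw [none_mem_ed] at hymem
      omega
    | some (j2, k2) =>
      obtain ⟨rfl, hv2⟩ := (some_mem_ed hm j2 k2 j t'').mp hymem
      exact ⟨k2, rfl, by omega, by omega⟩
  have hwalk : ∀ (v w : Vtx n m) (p : G'.Walk v w), U v → U w := by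
    intro v w p
    induction p with
    | nil => exact id
    | cons hadj p ih => exact fun hu => ih (hclosed _ _ hu hadj)
  have hstart : U (some (j, ⟨a, by omega⟩)) := ⟨⟨a, by omega⟩, rfl, le_rfl, hlt⟩
  obtain ⟨p⟩ := hS.2.2.preconnected (some (j, ⟨a, by omega⟩)) none
  obtain ⟨k, hk, -⟩ := hwalk _ _ p hstart
  exact absurd hk (by simp)

lemma missing_pair (hm : 3 ≤ m) {S : Finset (Sym2 (Vtx n m))}
    (hS : IsConnectedEdgeCover (friendshipGraph n m) S) (j : Fin n) {t t' : Fin m}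
    (h1 : ed hm j t ∉ S) (h2 : ed hm j t' ∉ S) : t = t' := by
  rcases Nat.lt_trichotomy (t : ℕ) (t' : ℕ) with h | h | h
  · exact absurd (missing_aux hm hS j h1 h2 h) not_false
  · exact Fin.ext h
  · exact absurd (missing_aux hm hS j h2 h1 h) not_false

end FGAux

namespace FGAux
open SimpleGraph Finset
variable {n m : ℕ}

def Sg (hm : 3 ≤ m) (g : Fin n → Option (Fin m)) : Finset (Sym2 (Vtx n m)) :=
  (Finset.univ.filter fun jt : Fin n × Fin m => g jt.1 ≠ some jt.2).image
    fun jt => ed hm jt.1 jt.2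

lemma mem_Sg (hm : 3 ≤ m) (g : Fin n → Option (Fin m)) (e : Sym2 (Vtx n m)) :
    e ∈ Sg hm g ↔ ∃ j t, e = ed hm j t ∧ g j ≠ some t := by
  simp only [Sg, Finset.mem_image, Finset.mem_filter, Finset.mem_univ, true_and, Prod.exists]
  constructor
  · rintro ⟨j, t, hg, rfl⟩; exact ⟨j, t, rfl, hg⟩
  · rintro ⟨j, t, rfl, hg⟩; exact ⟨j, t, hg, rfl⟩

lemma ed_mem_Sg (hm : 3 ≤ m) (g : Fin n → Option (Fin m)) (j : Fin n) (t : Fin m) :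
    ed hm j t ∈ Sg hm g ↔ g j ≠ some t := by
  rw [mem_Sg]
  constructor
  · rintro ⟨j', t', he, hg⟩
    obtain ⟨rfl, rfl⟩ := ed_inj hm he
    exact hg
  · intro hg; exact ⟨j, t, rfl, hg⟩

lemma supp_card_le (g : Fin n → Option (Fin m)) :
    (Finset.univ.filter fun j => g j ≠ none).card ≤ n := by
  calc (Finset.univ.filter fun j => g j ≠ none).card ≤ Finset.univ.card :=
    Finset.card_filter_le _ _
  _ = n := Finset.card_univ.trans (Fintype.card_fin n)

lemma card_pairs (g : Fin n → Option (Fin m)) :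
    (Finset.univ.filter fun jt : Fin n × Fin m => g jt.1 = some jt.2).card =
      (Finset.univ.filter fun j => g j ≠ none).card := by
  refine Finset.card_bij' (fun jt _ => jt.1)
    (fun j hj => (j, (g j).get (by
      simp only [Finset.mem_filter] at hj
      exact Option.isSome_iff_ne_none.mpr hj.2))) ?_ ?_ ?_ ?_
  · intro jt hjt
    simp only [Finset.mem_filter, Finset.mem_univ, true_and] at hjt ⊢
    simp [hjt]
  · intro j hj
    simp only [Finset.mem_filter, Finset.mem_univ, true_and]
    simp
  · intro jt hjt
    simp only [Finset.mem_filter, Finset.mem_univ, true_and] at hjt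
    ext
    · rfl
    · simp [hjt]
  · intro j hj
    rfl

lemma card_Sg (hm : 3 ≤ m) (g : Fin n → Option (Fin m)) :
    (Sg hm g).card = m * n - (Finset.univ.filter fun j => g j ≠ none).card := by
  rw [Sg, Finset.card_image_of_injOn (fun x _ y _ h => by
    obtain ⟨h1, h2⟩ := ed_inj hm h
    exact Prod.ext h1 h2)]
  have hsplit := Finset.card_filter_add_card_filter_not
    (s := (Finset.univ : Finset (Fin n × Fin m)))
    (p := fun jt => g jt.1 = some jt.2)
  have huniv : (Finset.univ : Finset (Fin n × Fin m)).card = m * n := by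
    simp [Finset.card_univ, mul_comm]
  rw [card_pairs, huniv] at hsplit
  simp only [ne_eq] at hsplit ⊢
  omega

lemma icec_Sg (hm : 3 ≤ m) (hn : 1 ≤ n) (g : Fin n → Option (Fin m)) :
    IsConnectedEdgeCover (friendshipGraph n m) (Sg hm g) := by
  refine icec_of hm hn (fun e he => ?_) (fun j t t' h1 h2 => ?_)
  · obtain ⟨j, t, he, -⟩ := (mem_Sg hm g e).mp he
    exact ⟨j, t, he⟩
  · rw [ed_mem_Sg, not_not] at h1 h2
    exact Option.some_injective _ (h1.symm.trans h2)

lemma Sg_injective (hm : 3 ≤ m) : Function.Injective (Sg (n := n) hm) := by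
  intro g g' h
  funext j
  have key : ∀ t : Fin m, g j = some t ↔ g' j = some t := by
    intro t
    have := (ed_mem_Sg hm g j t).symm.trans ((h ▸ Iff.rfl : ed hm j t ∈ Sg hm g ↔ ed hm j t ∈ Sg hm g') |>.trans (ed_mem_Sg hm g' j t))
    constructor
    · intro hg
      by_contra hg'
      exact (this.mpr hg') hg
    · intro hg'
      by_contra hg
      exact (this.mp hg) hg'
  cases hg : g j with
  | none =>
    cases hg' : g' j with
    | none => rfl
    | some t => exact absurd ((key t).mpr hg') (by simp [hg])
  | some t => exact ((key t).mp hg).symm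

lemma exists_g (hm : 3 ≤ m) {S : Finset (Sym2 (Vtx n m))}
    (hS : IsConnectedEdgeCover (friendshipGraph n m) S) :
    ∃ g : Fin n → Option (Fin m), S = Sg hm g := by
  classical
  refine ⟨fun j => if h : ∃ t, ed hm j t ∉ S then some h.choose else none, ?_⟩
  ext e
  rw [mem_Sg]
  constructor
  · intro he
    obtain ⟨j, t, rfl⟩ := (mem_edgeSet_iff hm e).mp (hS.1 e he)
    refine ⟨j, t, rfl, ?_⟩
    split_ifs with h
    · intro hc
      have := h.choose_spec
      rw [Option.some_inj] at hc
      exact this (hc ▸ he)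
    · simp
  · rintro ⟨j, t, rfl, hg⟩
    by_contra hne
    have hex : ∃ t, ed hm j t ∉ S := ⟨t, hne⟩
    rw [dif_pos hex] at hg
    exact hg (congrArg some (missing_pair hm hS j hex.choose_spec hne))

end FGAux

namespace FGAux
open SimpleGraph Finset

lemma card_fixed_supp (n m : ℕ) (A : Finset (Fin n)) :
    (Finset.univ.filter fun g : Fin n → Option (Fin m) =>
      (Finset.univ.filter fun j => g j ≠ none) = A).card = m ^ A.card := by
  classical
  rw [← Fintype.card_subtype]
  have e : {g : Fin n → Option (Fin m) // (Finset.univ.filter fun j => g j ≠ none) = A} ≃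
      (A → Fin m) := by
    refine ⟨fun g a => (g.1 a).get ?_, fun f => ⟨fun j => if h : j ∈ A then some (f ⟨j, h⟩)
      else none, ?_⟩, ?_, ?_⟩
    · have : (a : Fin n) ∈ Finset.univ.filter fun j => g.1 j ≠ none := by
        rw [g.2]; exact a.2
      rw [Finset.mem_filter] at this
      exact Option.isSome_iff_ne_none.mpr this.2
    · ext j
      by_cases h : j ∈ A <;> simp [h]
    · rintro ⟨g, hg⟩
      refine Subtype.ext (funext fun j => ?_)
      by_cases h : j ∈ A
      · simp [h]
      · have : j ∉ Finset.univ.filter fun j => g j ≠ none := by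
          rw [hg]; exact h
        rw [Finset.mem_filter] at this
        simp only [dif_neg h]
        simp at this
        exact this.symm
    · intro f
      funext a
      simp [a.2]
  rw [Fintype.card_congr e, Fintype.card_fun, Fintype.card_fin, Fintype.card_coe]

lemma count_g (n m i : ℕ) :
    Nat.card {g : Fin n → Option (Fin m) //
      (Finset.univ.filter fun j => g j ≠ none).card = i} = n.choose i * m ^ i := by
  classical
  rw [Nat.card_eq_fintype_card, Fintype.card_subtype]
  rw [Finset.card_eq_sum_card_fiberwise
    (f := fun g : Fin n → Option (Fin m) => Finset.univ.filter fun j => g j ≠ none)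
    (t := Finset.univ.powersetCard i)
    (fun g hg => by
      rw [Finset.mem_coe, Finset.mem_filter] at hg
      exact Finset.mem_coe.mpr (Finset.mem_powersetCard_univ.mpr hg.2))]
  have hfib : ∀ A ∈ Finset.univ.powersetCard i,
      ((Finset.univ.filter fun g : Fin n → Option (Fin m) =>
        (Finset.univ.filter fun j => g j ≠ none).card = i).filter
        fun g => (Finset.univ.filter fun j => g j ≠ none) = A).card = m ^ i := by
    intro A hA
    have hAcard := Finset.mem_powersetCard_univ.mp hA
    rw [Finset.filter_filter]
    have : ∀ g : Fin n → Option (Fin m),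
        ((Finset.univ.filter fun j => g j ≠ none).card = i ∧
          (Finset.univ.filter fun j => g j ≠ none) = A) ↔
        (Finset.univ.filter fun j => g j ≠ none) = A := by
      intro g
      constructor
      · exact And.right
      · intro h; exact ⟨h ▸ hAcard, h⟩
    rw [Finset.filter_congr (fun g _ => this g), card_fixed_supp n m A, hAcard]
  rw [Finset.sum_congr rfl hfib, Finset.sum_const, smul_eq_mul,
    Finset.card_powersetCard, Finset.card_univ, Fintype.card_fin]

end FGAux

theorem stmt4 (n m : ℕ) (hn : 1 ≤ n) (hm : 3 ≤ m) :
    (∀ i : ℕ, i ≤ n →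
      eC (friendshipGraph n m) (m * n - i) = n.choose i * m ^ i) ∧
    (∀ j : ℕ, j < m * n - n ∨ m * n < j → eC (friendshipGraph n m) j = 0) := by
  classical
  have hnm : n ≤ m * n := Nat.le_mul_of_pos_left n (by omega)
  constructor
  · intro i hi
    rw [eC]
    have hbij : Function.Bijective (fun g : {g : Fin n → Option (Fin m) //
        (Finset.univ.filter fun j => g j ≠ none).card = i} =>
        (⟨FGAux.Sg hm g.1, by rw [FGAux.card_Sg hm g.1, g.2], FGAux.icec_Sg hm hn g.1⟩ :
          {S : Finset (Sym2 (FGAux.Vtx n m)) //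
            S.card = m * n - i ∧ IsConnectedEdgeCover (friendshipGraph n m) S})) := by
      constructor
      · intro a b hab
        rw [Subtype.mk.injEq] at hab
        exact Subtype.ext (FGAux.Sg_injective hm hab)
      · rintro ⟨S, hcard, hS⟩
        obtain ⟨g, rfl⟩ := FGAux.exists_g hm hS
        have h1 := FGAux.card_Sg hm g
        have h2 := FGAux.supp_card_le g
        refine ⟨⟨g, by omega⟩, Subtype.ext rfl⟩
    rw [Nat.card_congr (Equiv.ofBijective _ hbij).symm, FGAux.count_g]
  · intro j hj
    rw [eC, Nat.card_eq_zero]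
    refine Or.inl ⟨?_⟩
    rintro ⟨S, hcard, hS⟩
    obtain ⟨g, rfl⟩ := FGAux.exists_g hm hS
    have h1 := FGAux.card_Sg hm g
    have h2 := FGAux.supp_card_le g
    omega
end

section
/- Let G be a simple graph of order n such that e_c(G, i) = e_c(K_n, i) for every i (that is, E_c(G,x) = E_c(K_n,x)). Then G is isomorphic to the complete graph K_n. -/
theorem stmt5 {V : Type*} [Fintype V] (G : SimpleGraph V) (n : ℕ)
    (hn : Fintype.card V = n)
    (h : ∀ i : ℕ, eC G i = eC (⊤ : SimpleGraph (Fin n)) i) :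
    Nonempty (G ≃g (⊤ : SimpleGraph (Fin n))) := by
  classical
  suffices hG : G = ⊤ by
    subst hG
    exact ⟨SimpleGraph.Iso.completeGraph (Fintype.equivFinOfCardEq hn)⟩
  rcases le_or_gt n 1 with hle | hlt
  · -- at most one vertex: every graph is the complete graph
    have hsub : Subsingleton V := by
      rw [← Fintype.card_le_one_iff_subsingleton, hn]; exact hle
    ext u v
    simp only [SimpleGraph.top_adj]
    constructor
    · intro huv; exact (G.ne_of_adj huv)
    · intro huv; exact absurd (Subsingleton.elim u v) huv
  · -- n ≥ 2
    set N := (⊤ : SimpleGraph (Fin n)).edgeFinset.card with hN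
    have hne : Nonempty (Fin n) := ⟨⟨0, by omega⟩⟩
    -- eC K_n N ≠ 0
    have hKn : eC (⊤ : SimpleGraph (Fin n)) N ≠ 0 := by
      have : Nonempty {S : Finset (Sym2 (Fin n)) // S.card = N ∧
          IsConnectedEdgeCover (⊤ : SimpleGraph (Fin n)) S} := by
        refine ⟨⟨(⊤ : SimpleGraph (Fin n)).edgeFinset, rfl, ?_, ?_, ?_⟩⟩
        · intro e he; exact SimpleGraph.mem_edgeFinset.mp he
        · intro v
          obtain ⟨w, hw⟩ := Fintype.exists_ne_of_one_lt_card (by simpa using hlt) v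
          refine ⟨s(v, w), ?_, ?_⟩
          · rw [SimpleGraph.mem_edgeFinset, SimpleGraph.mem_edgeSet]
            exact fun hvw => hw hvw.symm
          · exact Sym2.mem_mk_left v w
        · rw [SimpleGraph.coe_edgeFinset, SimpleGraph.fromEdgeSet_edgeSet]
          exact SimpleGraph.connected_top
      exact Nat.card_pos.ne'
    -- hence eC G N ≠ 0, get a cover S of G with card N
    have hGN : eC G N ≠ 0 := by rw [h N]; exact hKn
    have : Nonempty {S : Finset (Sym2 V) // S.card = N ∧ IsConnectedEdgeCover G S} := by
      by_contra hc
      rw [not_nonempty_iff] at hc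
      exact hGN (Nat.card_of_isEmpty)
    obtain ⟨S, hScard, hSsub, _, _⟩ := this.some
    -- S ⊆ edgeFinset ⊤ on V
    have hsub : S ⊆ (⊤ : SimpleGraph V).edgeFinset := by
      intro e he
      rw [SimpleGraph.mem_edgeFinset]
      exact SimpleGraph.edgeSet_mono le_top (hSsub e he)
    have hcards : (⊤ : SimpleGraph V).edgeFinset.card = N := by
      rw [hN, SimpleGraph.card_edgeFinset_top_eq_card_choose_two,
        SimpleGraph.card_edgeFinset_top_eq_card_choose_two, hn, Fintype.card_fin]
    have hSeq : S = (⊤ : SimpleGraph V).edgeFinset :=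
      Finset.eq_of_subset_of_card_le hsub (by rw [hcards, hScard])
    ext u v
    simp only [SimpleGraph.top_adj]
    constructor
    · exact G.ne_of_adj
    · intro huv
      have : s(u, v) ∈ S := by
        rw [hSeq, SimpleGraph.mem_edgeFinset, SimpleGraph.mem_edgeSet]
        exact huv
      exact G.mem_edgeSet.mp (hSsub _ this)
end

section
/- For every natural number n ≥ 4 and every integer i ≥ 1, the number of connected edge cover sets of the cycle C_n of cardinality i equals the number of connected edge cover sets of the cycle C_{n−1} of cardinality i−1, plus 1 if i = n−1 and plus 0 otherwise; that is, E_c(C_n, x) = x · E_c(C_{n−1}, x) + x^{n−1}. -/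
namespace CycleAux

open SimpleGraph Finset
open Fin.CommRing Fin.NatCast

variable {k : ℕ} {a b : Fin (k+3)}

def cedge (k : ℕ) (v : Fin (k+3)) : Sym2 (Fin (k+3)) := s(v, v+1)

def E (k : ℕ) : Finset (Sym2 (Fin (k+3))) := Finset.univ.image (cedge k)

lemma two_ne_zero' : (2 : Fin (k+3)) ≠ 0 := by
  intro h
  have : ((2 : Fin (k+3)) : ℕ) = 0 := by rw [h]; rfl
  simp [Fin.val_two] at this
  rw [Nat.mod_eq_of_lt (by omega)] at this
  omega

lemma one_ne_zero' : (1 : Fin (k+3)) ≠ 0 := by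
  intro h
  have : ((1 : Fin (k+3)) : ℕ) = 0 := by rw [h]; rfl
  simp at this

lemma cedge_injective : Function.Injective (cedge k) := by
  intro a b h
  simp only [cedge, Sym2.eq, Sym2.rel_iff', Prod.mk.injEq, Prod.swap_prod_mk] at h
  rcases h with ⟨h1, _⟩ | ⟨h1, h2⟩
  · exact h1
  · exfalso
    have h3 : a = a + 2 := by
      calc a = b + 1 := h1
        _ = (a + 1) + 1 := by rw [h2]
        _ = a + 2 := by ring
    exact two_ne_zero' (left_eq_add.mp h3)

lemma mem_E_iff' {e : Sym2 (Fin (k+3))} : e ∈ E k ↔ ∃ w, cedge k w = e := by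
  simp [E]

lemma mem_E_iff {e : Sym2 (Fin (k+3))} : e ∈ E k ↔ e ∈ (cycleGraph (k+3)).edgeSet := by
  rw [mem_E_iff']
  induction e using Sym2.ind with
  | _ u v =>
    rw [mem_edgeSet, cycleGraph_adj']
    constructor
    · rintro ⟨w, hw⟩
      rw [cedge] at hw
      rw [Sym2.eq, Sym2.rel_iff', Prod.mk.injEq, Prod.swap_prod_mk, Prod.mk.injEq] at hw
      rcases hw with ⟨h1, h2⟩ | ⟨h1, h2⟩
      · right; rw [← h1, ← h2]; simp
      · left; rw [← h1, ← h2]; simp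
    · intro h
      rcases h with h | h
      · refine ⟨v, ?_⟩
        have : u - v = 1 := by apply Fin.ext; rw [h]; simp
        have hu : u = v + 1 := by rw [eq_add_of_sub_eq this]; ring
        rw [cedge, Sym2.eq_swap, hu]
      · refine ⟨u, ?_⟩
        have : v - u = 1 := by apply Fin.ext; rw [h]; simp
        have hv : v = u + 1 := by rw [eq_add_of_sub_eq this]; ring
        rw [cedge, hv]

lemma coe_E : (↑(E k) : Set (Sym2 (Fin (k+3)))) = (cycleGraph (k+3)).edgeSet := by
  ext e; rw [Finset.mem_coe, mem_E_iff]

lemma card_E : (E k).card = k + 3 := by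
  rw [E, Finset.card_image_of_injective _ cedge_injective, card_univ, Fintype.card_fin]

lemma cedge_mem : cedge k a ∈ E k := Finset.mem_image_of_mem _ (mem_univ a)

variable {c : Fin (k+3)}

lemma eq_of_sub_val (h : ((c - (a+1)) : Fin (k+3)).val = k+2) : c = a := by
  have h1 : c - (a+1) = -1 := by
    apply Fin.ext; rw [h, Fin.coe_neg_one]
  have h2 : c = -1 + (a+1) := eq_add_of_sub_eq h1
  rw [h2]; ring

lemma sub_val_lt (h : c ≠ a) : ((c - (a+1)) : Fin (k+3)).val < k+2 := by
  have := (c - (a+1)).isLt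
  rcases Nat.lt_or_ge ((c - (a+1)) : Fin (k+3)).val (k+2) with h' | h'
  · exact h'
  · exact absurd (eq_of_sub_val (by omega)) h

lemma walk_inv {V : Type*} {G : SimpleGraph V} (P : V → Prop)
    (hpres : ∀ a b, G.Adj a b → P a → P b) : ∀ {u v : V}, G.Walk u v → P u → P v := by
  intro u v w
  induction w with
  | nil => exact id
  | cons h p ih => exact fun hu => ih (hpres _ _ h hu)

lemma pres_key (hca : c ≠ a) (hcb : c ≠ b) :
    (((c - (a+1)) : Fin (k+3)).val ≤ ((b - (a+1)) : Fin (k+3)).val ↔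
     (((c+1) - (a+1)) : Fin (k+3)).val ≤ ((b - (a+1)) : Fin (k+3)).val) := by
  have hd : (c+1) - (a+1) = (c - (a+1)) + 1 := by ring
  have hlt := sub_val_lt hca
  have hval : (((c - (a+1)) + 1 : Fin (k+3))).val = ((c - (a+1)) : Fin (k+3)).val + 1 := by
    rw [Fin.val_add_one, if_neg]
    intro hl
    rw [hl] at hlt
    simp [Fin.last] at hlt
  have hne : ((c - (a+1)) : Fin (k+3)).val ≠ ((b - (a+1)) : Fin (k+3)).val :=
    fun h => hcb (sub_left_injective (Fin.ext h))
  rw [hd, hval]; omega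

lemma not_connected (hab : a ≠ b) {S : Finset (Sym2 (Fin (k+3)))}
    (hSE : S ⊆ E k) (ha : cedge k a ∉ S) (hb : cedge k b ∉ S) :
    ¬ (fromEdgeSet (↑S : Set (Sym2 (Fin (k+3))))).Connected := by
  intro hc
  set P : Fin (k+3) → Prop := fun v => ((v - (a+1)) : Fin (k+3)).val ≤ ((b - (a+1)) : Fin (k+3)).val with hP
  have hpres : ∀ u v, (fromEdgeSet (↑S : Set (Sym2 (Fin (k+3))))).Adj u v → P u → P v := by
    intro u v huv
    rw [fromEdgeSet_adj] at huv
    obtain ⟨hmem, hne⟩ := huv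
    have hmem' : s(u,v) ∈ S := hmem
    obtain ⟨c, hw⟩ := mem_E_iff'.mp (hSE hmem')
    have hca : c ≠ a := by rintro rfl; exact ha (hw ▸ hmem')
    have hcb : c ≠ b := by rintro rfl; exact hb (hw ▸ hmem')
    rw [cedge] at hw
    rw [Sym2.eq, Sym2.rel_iff', Prod.mk.injEq, Prod.swap_prod_mk, Prod.mk.injEq] at hw
    rcases hw with ⟨h1, h2⟩ | ⟨h1, h2⟩
    · rw [← h1, ← h2]; exact (pres_key hca hcb).mp
    · rw [← h1, ← h2]; exact (pres_key hca hcb).mpr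
  have hPa1 : P (a+1) := by simp [hP]
  have hPa : ¬ P a := by
    have hv : ((a - (a+1)) : Fin (k+3)).val = k+2 := by
      have h1 : a - (a+1) = -1 := by ring
      rw [h1, Fin.coe_neg_one]
    have hKlt := sub_val_lt (Ne.symm hab)
    simp only [hP]; omega
  obtain ⟨w⟩ := hc.preconnected (a+1) a
  exact hPa (walk_inv P hpres w hPa1)

lemma connected_erase (a : Fin (k+3)) :
    (fromEdgeSet (↑((E k).erase (cedge k a)) : Set (Sym2 (Fin (k+3))))).Connected := by
  rw [connected_iff]
  refine ⟨?_, ⟨a⟩⟩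
  have key : ∀ j : ℕ, j < k+3 →
      (fromEdgeSet (↑((E k).erase (cedge k a)) : Set (Sym2 (Fin (k+3))))).Reachable
        (a+1) (a+1+(j : Fin (k+3))) := by
    intro j
    induction j with
    | zero => intro _; rw [Nat.cast_zero, add_zero]
    | succ j ih =>
      intro hj
      refine (ih (by omega)).trans (Adj.reachable ?_)
      have hstep : (a+1+((j : ℕ) : Fin (k+3))) + 1 = a+1+(((j+1 : ℕ)) : Fin (k+3)) := by
        push_cast; ring
      rw [← hstep, fromEdgeSet_adj]
      refine ⟨?_, ?_⟩
      · show cedge k (a+1+((j : ℕ) : Fin (k+3))) ∈ _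
        rw [Finset.mem_coe, Finset.mem_erase]
        refine ⟨?_, cedge_mem⟩
        intro hEq
        have heq2 := cedge_injective hEq
        have h2 : a + (1 + ((j : ℕ) : Fin (k+3))) = a + 0 := by
          rw [add_zero]; conv_rhs => rw [← heq2]
          ring
        have h3 : (1 : Fin (k+3)) + ((j : ℕ) : Fin (k+3)) = 0 := add_left_cancel h2
        have h4 : (((1+j : ℕ)) : Fin (k+3)) = 0 := by push_cast; exact h3
        have h5 := congrArg Fin.val h4
        rw [Fin.val_natCast] at h5
        have h6 : (1+j) % (k+3) = 1+j := Nat.mod_eq_of_lt (by omega)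
        simp only [Fin.val_zero] at h5
        omega
      · intro hEq
        exact one_ne_zero' (left_eq_add.mp hEq)
  intro u v
  have hu := key ((u - (a+1)) : Fin (k+3)).val (u - (a+1)).isLt
  have hv := key ((v - (a+1)) : Fin (k+3)).val (v - (a+1)).isLt
  rw [Fin.cast_val_eq_self] at hu hv
  rw [show a+1+(u-(a+1)) = u by ring] at hu
  rw [show a+1+(v-(a+1)) = v by ring] at hv
  exact hu.symm.trans hv

lemma mem_cedge_left : a ∈ cedge k a := Sym2.mem_mk_left _ _

lemma mem_cedge_right : a ∈ cedge k (a - 1) := by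
  have : cedge k (a-1) = s(a-1, a) := by rw [cedge]; congr 1; ring
  rw [this]; exact Sym2.mem_mk_right _ _

lemma cover_E : IsConnectedEdgeCover (cycleGraph (k+3)) (E k) := by
  refine ⟨fun e he => mem_E_iff.mp he, fun v => ⟨cedge k v, cedge_mem, mem_cedge_left⟩, ?_⟩
  rw [coe_E, fromEdgeSet_edgeSet]
  exact cycleGraph_connected

lemma cover_erase (a : Fin (k+3)) :
    IsConnectedEdgeCover (cycleGraph (k+3)) ((E k).erase (cedge k a)) := by
  refine ⟨fun e he => mem_E_iff.mp (Finset.mem_of_mem_erase he), ?_, connected_erase a⟩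
  intro v
  by_cases h : v = a
  · subst h
    refine ⟨cedge k (v-1), Finset.mem_erase.mpr ⟨?_, cedge_mem⟩, mem_cedge_right⟩
    intro hEq
    have h1 := cedge_injective hEq
    exact one_ne_zero' (sub_eq_self.mp h1)
  · exact ⟨cedge k v, Finset.mem_erase.mpr ⟨fun hEq => h (cedge_injective hEq), cedge_mem⟩,
      mem_cedge_left⟩

lemma char {S : Finset (Sym2 (Fin (k+3)))}
    (h : IsConnectedEdgeCover (cycleGraph (k+3)) S) :
    S = E k ∨ ∃ a, S = (E k).erase (cedge k a) := by
  obtain ⟨hedges, hcov, hconn⟩ := h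
  have hSE : S ⊆ E k := fun e he => mem_E_iff.mpr (hedges e he)
  have hT : ((E k) \ S).card ≤ 1 := by
    by_contra h1
    push_neg at h1
    obtain ⟨e1, he1, e2, he2, hne⟩ := Finset.one_lt_card.mp h1
    obtain ⟨he1E, he1S⟩ := Finset.mem_sdiff.mp he1
    obtain ⟨he2E, he2S⟩ := Finset.mem_sdiff.mp he2
    obtain ⟨a, ha⟩ := mem_E_iff'.mp he1E
    obtain ⟨b, hb⟩ := mem_E_iff'.mp he2E
    have hab : a ≠ b := fun hEq => hne (by rw [← ha, ← hb, hEq])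
    exact not_connected hab hSE (ha ▸ he1S) (hb ▸ he2S) hconn
  rcases Nat.le_one_iff_eq_zero_or_eq_one.mp hT with h0 | h1
  · left
    exact Finset.Subset.antisymm hSE
      (Finset.sdiff_eq_empty_iff_subset.mp (Finset.card_eq_zero.mp h0))
  · right
    obtain ⟨e, he⟩ := Finset.card_eq_one.mp h1
    have heM : e ∈ (E k) \ S := he ▸ Finset.mem_singleton_self e
    obtain ⟨heE, heS⟩ := Finset.mem_sdiff.mp heM
    obtain ⟨a, ha⟩ := mem_E_iff'.mp heE
    refine ⟨a, ?_⟩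
    rw [ha]
    ext x
    rw [Finset.mem_erase]
    constructor
    · intro hx
      exact ⟨fun hEq => heS (hEq ▸ hx), hSE hx⟩
    · rintro ⟨hxe, hxE⟩
      by_contra hxS
      have : x ∈ (E k) \ S := Finset.mem_sdiff.mpr ⟨hxE, hxS⟩
      rw [he, Finset.mem_singleton] at this
      exact hxe this

lemma erase_injective : Function.Injective (fun a : Fin (k+3) => (E k).erase (cedge k a)) := by
  intro a b h
  by_contra hne
  have hm : cedge k b ∈ (E k).erase (cedge k a) :=
    Finset.mem_erase.mpr ⟨fun hEq => hne (cedge_injective hEq).symm, cedge_mem⟩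
  have h2 : (E k).erase (cedge k a) = (E k).erase (cedge k b) := h
  rw [h2] at hm
  exact (Finset.mem_erase.mp hm).1 rfl

lemma eC_cycle (k j : ℕ) :
    eC (cycleGraph (k+3)) j = if j = k+2 then k+3 else if j = k+3 then 1 else 0 := by
  have hcount : eC (cycleGraph (k+3)) j =
      Set.ncard {S : Finset (Sym2 (Fin (k+3))) |
        S.card = j ∧ IsConnectedEdgeCover (cycleGraph (k+3)) S} :=
    Nat.card_coe_set_eq _
  rw [hcount]
  by_cases hj2 : j = k+2
  · subst hj2
    rw [if_pos rfl]
    have hset : {S : Finset (Sym2 (Fin (k+3))) |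
        S.card = k+2 ∧ IsConnectedEdgeCover (cycleGraph (k+3)) S}
        = Set.range (fun a : Fin (k+3) => (E k).erase (cedge k a)) := by
      ext S
      simp only [Set.mem_setOf_eq, Set.mem_range]
      constructor
      · rintro ⟨hcard, hP⟩
        rcases char hP with rfl | ⟨a, rfl⟩
        · rw [card_E] at hcard; omega
        · exact ⟨a, rfl⟩
      · rintro ⟨a, rfl⟩
        refine ⟨?_, cover_erase a⟩
        rw [Finset.card_erase_of_mem cedge_mem, card_E]
        omega
    rw [hset, ← Set.image_univ, Set.ncard_image_of_injective _ erase_injective,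
      Set.ncard_univ, Nat.card_eq_fintype_card, Fintype.card_fin]
  · by_cases hj3 : j = k+3
    · subst hj3
      rw [if_neg hj2, if_pos rfl]
      have hset : {S : Finset (Sym2 (Fin (k+3))) |
          S.card = k+3 ∧ IsConnectedEdgeCover (cycleGraph (k+3)) S} = {E k} := by
        ext S
        simp only [Set.mem_setOf_eq, Set.mem_singleton_iff]
        constructor
        · rintro ⟨hcard, hP⟩
          rcases char hP with rfl | ⟨a, rfl⟩
          · rfl
          · rw [Finset.card_erase_of_mem cedge_mem, card_E] at hcard; omega
        · rintro rfl
          exact ⟨card_E, cover_E⟩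
      rw [hset, Set.ncard_singleton]
    · rw [if_neg hj2, if_neg hj3]
      have hset : {S : Finset (Sym2 (Fin (k+3))) |
          S.card = j ∧ IsConnectedEdgeCover (cycleGraph (k+3)) S} = ∅ := by
        ext S
        simp only [Set.mem_setOf_eq, Set.mem_empty_iff_false, iff_false, not_and]
        intro hcard hP
        rcases char hP with rfl | ⟨a, rfl⟩
        · rw [card_E] at hcard; exact hj3 hcard.symm
        · rw [Finset.card_erase_of_mem cedge_mem, card_E] at hcard
          exact hj2 hcard.symm
      rw [hset, Set.ncard_empty]

end CycleAux

theorem stmt8 (n : ℕ) (hn : 4 ≤ n) (i : ℕ) (hi : 1 ≤ i) :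
    eC (SimpleGraph.cycleGraph n) i =
      eC (SimpleGraph.cycleGraph (n - 1)) (i - 1) + (if i = n - 1 then 1 else 0) := by
  obtain ⟨k, rfl⟩ : ∃ k, n = k + 4 := ⟨n - 4, by omega⟩
  have h1 : eC (SimpleGraph.cycleGraph ((k+1)+3)) i
      = if i = (k+1)+2 then (k+1)+3 else if i = (k+1)+3 then 1 else 0 := CycleAux.eC_cycle (k+1) i
  have h2 : eC (SimpleGraph.cycleGraph (k+3)) (i-1)
      = if i-1 = k+2 then k+3 else if i-1 = k+3 then 1 else 0 := CycleAux.eC_cycle k (i-1)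
  have hn1 : k + 4 - 1 = k + 3 := rfl
  rw [hn1]
  rw [show eC (SimpleGraph.cycleGraph (k+4)) i = eC (SimpleGraph.cycleGraph ((k+1)+3)) i from rfl]
  rw [h1, h2]
  split_ifs <;> omega
end
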